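/- If j ∈ J and e_{J \ {j}} = e_J, then M_{J \ {j}} = M_J. Consequently, for every finset M of Fin n, the k-submodule of T spanned by { b_K : M_K = M } is invariant under the Taylor differential ∂, and T equipped with ∂ is the internal direct sum, over the distinct values M of the map J ↦ M_J, of these ∂-invariant submodules. -/

import Mathlib

open scoped Classical

/-- `M_J` : the union of all finsets `K` with `e_K = e_J`, where `e_J = J.sup e` is the
exponent vector of the lcm `f_J`. -/
noncomputable def MJ {n : ℕ} {σ : Type*} (e : Fin n → (σ →₀ ℕ)) (J : Finset (Fin n)) :
    Finset (Fin n) :=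
  Finset.sup (Finset.univ.filter fun K : Finset (Fin n) => K.sup e = J.sup e) id

/-- The Taylor differential over `k` on the free module `T = Finset (Fin n) →₀ k`
with basis `b_J`, determined by
`∂ b_J = ∑_{j ∈ J, e_{J \ {j}} = e_J} (-1)^{#{p ∈ J : p < j}} • b_{J \ {j}}`. -/
noncomputable def taylorD {n : ℕ} {σ : Type*} (e : Fin n → (σ →₀ ℕ))
    (k : Type*) [CommRing k] :
    (Finset (Fin n) →₀ k) →ₗ[k] (Finset (Fin n) →₀ k) :=
  Finsupp.lsum k fun J => LinearMap.toSpanSingleton k _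
    (∑ j ∈ J.filter (fun j => (J.erase j).sup e = J.sup e),
      ((-1 : k) ^ (J.filter (fun p => p < j)).card) • Finsupp.single (J.erase j) (1 : k))

/-- The `k`-submodule of `T` spanned by the basis vectors `b_K` with `M_K = M`. -/
noncomputable def taylorPiece {n : ℕ} {σ : Type*} (e : Fin n → (σ →₀ ℕ))
    (k : Type*) [CommRing k] (M : Finset (Fin n)) :
    Submodule k (Finset (Fin n) →₀ k) :=
  Submodule.span k {v : Finset (Fin n) →₀ k | ∃ K : Finset (Fin n),
    MJ e K = M ∧ v = Finsupp.single K (1 : k)}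

lemma MJ_congr {n : ℕ} {σ : Type*} (e : Fin n → (σ →₀ ℕ)) {J J' : Finset (Fin n)}
    (h : J.sup e = J'.sup e) : MJ e J = MJ e J' := by
  unfold MJ; rw [h]

lemma taylorPiece_eq {n : ℕ} {σ : Type*} (e : Fin n → (σ →₀ ℕ))
    (k : Type*) [CommRing k] (M : Finset (Fin n)) :
    taylorPiece e k M = Finsupp.supported k k {K | MJ e K = M} := by
  rw [Finsupp.supported_eq_span_single, taylorPiece]
  congr 1
  ext v
  constructor
  · rintro ⟨K, hK, rfl⟩; exact ⟨K, hK, rfl⟩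
  · rintro ⟨K, hK, rfl⟩; exact ⟨K, hK, rfl⟩

/-- If `j ∈ J` and `e_{J \ {j}} = e_J` then `M_{J \ {j}} = M_J`.  Consequently each
submodule spanned by `{ b_K : M_K = M }` is invariant under the Taylor differential,
and `T` is the internal direct sum of these submodules over the distinct values `M` of
the map `J ↦ M_J`. -/
theorem taylor_decomposition {n : ℕ} {σ : Type*} (e : Fin n → (σ →₀ ℕ))
    (k : Type*) [CommRing k] :
    (∀ (J : Finset (Fin n)) (j : Fin n), j ∈ J → (J.erase j).sup e = J.sup e →
        MJ e (J.erase j) = MJ e J) ∧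
      (∀ M : Finset (Fin n),
        Submodule.map (taylorD e k) (taylorPiece e k M) ≤ taylorPiece e k M) ∧
      DirectSum.IsInternal
        (fun M : {M : Finset (Fin n) // ∃ J, MJ e J = M} => taylorPiece e k M.1) := by
  refine ⟨fun J j _ h => MJ_congr e h, ?_, ?_⟩
  · intro M
    rw [Submodule.map_le_iff_le_comap, taylorPiece, Submodule.span_le]
    rintro v ⟨K, hK, rfl⟩
    simp only [Submodule.mem_comap, SetLike.mem_coe]
    rw [taylorD, Finsupp.lsum_single, LinearMap.toSpanSingleton_apply, one_smul]
    refine Submodule.sum_mem _ fun j hj => Submodule.smul_mem _ _ ?_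
    rw [Finset.mem_filter] at hj
    exact Submodule.subset_span ⟨K.erase j, (MJ_congr e hj.2).trans hK, rfl⟩
  · rw [DirectSum.isInternal_submodule_iff_iSupIndep_and_iSup_eq_top]
    constructor
    · intro i
      simp only [taylorPiece_eq]
      refine Disjoint.mono_right ?_
        (Finsupp.disjoint_supported_supported (t := {K | MJ e K ≠ i.1})
          (fun s hs hs' => by
            rintro x hx
            exact absurd (hs hx : MJ e x = i.1) (hs' hx)))
      rw [iSup_le_iff]
      intro j
      rw [iSup_le_iff]
      intro hj
      exact Finsupp.supported_mono fun K hK => by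
        simp only [Set.mem_setOf_eq] at hK ⊢
        rw [hK]
        exact fun h => hj (Subtype.ext h.symm ▸ rfl)
    · rw [eq_top_iff, ← (Finsupp.supported_univ (M := k) (R := k) (α := Finset (Fin n)))]
      have : (Set.univ : Set (Finset (Fin n))) =
          ⋃ M : {M : Finset (Fin n) // ∃ J, MJ e J = M}, {K | MJ e K = M.1} := by
        ext K
        simp only [Set.mem_univ, Set.mem_iUnion, true_iff]
        exact ⟨⟨MJ e K, K, rfl⟩, rfl⟩
      rw [this, Finsupp.supported_iUnion]
      exact iSup_mono fun M => le_of_eq (taylorPiece_eq e k M.1).symm
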